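/- Let g ≥ 4 be an even integer and let G be a finite 3-regular simple graph of girth g on n vertices that contains two vertices at distance at least g/2. Then for every integer k ≥ 1, setting m = 3k, there exists a finite simple graph H of girth exactly g and order k(n−2)+2 which has two vertices of degree m while each of its remaining k(n−2) vertices has degree 3. -/

import Mathlib

open SimpleGraph

namespace Statement0Aux

variable {V : Type} (G : SimpleGraph V) (u v : V) (k : ℕ)

/-- The vertices of `G` other than `u` and `v`. -/
abbrev Wt (u v : V) : Type := {x : V // x ≠ u ∧ x ≠ v}

/-- The pair of special vertices. -/
def uvf (u v : V) : Fin 2 → V := ![u, v]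

/-- The glued graph: `k` copies of `G - {u,v}` plus two hub vertices. -/
def HG : SimpleGraph ((Fin k × Wt u v) ⊕ Fin 2) where
  Adj z w :=
    match z, w with
    | .inl p, .inl q => p.1 = q.1 ∧ G.Adj p.2 q.2
    | .inl p, .inr c => G.Adj (uvf u v c) p.2
    | .inr c, .inl p => G.Adj (uvf u v c) p.2
    | .inr _, .inr _ => False
  symm := by
    refine ⟨?_⟩
    rintro (p | c) (q | d) h
    · exact ⟨h.1.symm, h.2.symm⟩
    · exact h
    · exact h
    · exact h
  loopless := by
    refine ⟨?_⟩
    rintro (p | c) h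
    · exact G.irrefl h.2
    · exact h

@[simp] lemma HG_adj_inl_inl {p q : Fin k × Wt u v} :
    (HG G u v k).Adj (.inl p) (.inl q) ↔ p.1 = q.1 ∧ G.Adj p.2 q.2 := Iff.rfl

@[simp] lemma HG_adj_inl_inr {p : Fin k × Wt u v} {c : Fin 2} :
    (HG G u v k).Adj (.inl p) (.inr c) ↔ G.Adj (uvf u v c) p.2 := Iff.rfl

@[simp] lemma HG_adj_inr_inl {p : Fin k × Wt u v} {c : Fin 2} :
    (HG G u v k).Adj (.inr c) (.inl p) ↔ G.Adj (uvf u v c) p.2 := Iff.rfl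

@[simp] lemma HG_adj_inr_inr {c d : Fin 2} :
    ¬ (HG G u v k).Adj (.inr c) (.inr d) := fun h => h

/-- The folding homomorphism from `HG` to `G`. -/
def Fh : HG G u v k →g G where
  toFun := Sum.elim (fun p => (p.2 : V)) (uvf u v)
  map_rel' := by
    rintro (p | c) (q | d) h
    · exact h.2
    · exact G.symm.symm _ _ h
    · exact h
    · exact h.elim

@[simp] lemma Fh_inl (p : Fin k × Wt u v) : Fh G u v k (.inl p) = (p.2 : V) := rfl
@[simp] lemma Fh_inr (c : Fin 2) : Fh G u v k (.inr c) = uvf u v c := rfl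

variable [DecidableEq V]

/-- The embedding of `G` onto copy `i` (with `u`, `v` going to the hubs). -/
def Jf (i : Fin k) (x : V) : (Fin k × Wt u v) ⊕ Fin 2 :=
  if hu : x = u then .inr 0 else if hv : x = v then .inr 1 else .inl (i, ⟨x, hu, hv⟩)

lemma Jf_u (i : Fin k) : Jf u v k i u = .inr 0 := by simp [Jf]

lemma Jf_v (huv : u ≠ v) (i : Fin k) : Jf u v k i v = .inr 1 := by
  simp [Jf, huv.symm]

lemma Jf_w (i : Fin k) {x : V} (hu : x ≠ u) (hv : x ≠ v) :
    Jf u v k i x = .inl (i, ⟨x, hu, hv⟩) := by simp [Jf, hu, hv]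

lemma Jf_wt (i : Fin k) (x : Wt u v) : Jf u v k i (x : V) = .inl (i, x) := by
  rw [Jf_w u v k i x.2.1 x.2.2]

lemma Jf_inj (huv : u ≠ v) (i : Fin k) : Function.Injective (Jf u v k i) := by
  intro x y h
  unfold Jf at h
  split_ifs at h <;> simp_all

/-- The homomorphism `G →g HG` for copy `i`. -/
def Jh (huv : u ≠ v) (hnadj : ¬ G.Adj u v) (i : Fin k) : G →g HG G u v k where
  toFun := Jf u v k i
  map_rel' := by
    intro x y h
    by_cases hxu : x = u <;> by_cases hxv : x = v <;>
      by_cases hyu : y = u <;> by_cases hyv : y = v <;>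
      subst_vars <;>
      simp_all [Jf_u, Jf_v, Jf_w, uvf] <;>
      first
        | exact h.symm
        | exact (hnadj h).elim
        | exact (hnadj h.symm).elim

lemma egirth_le_len {α : Type} (A : SimpleGraph α) {a : α} (w : A.Walk a a)
    (hw : w.IsCycle) : A.egirth ≤ w.length := by
  rw [SimpleGraph.egirth]
  exact iInf_le_of_le a <| iInf_le_of_le w <| iInf_le _ hw

lemma egirth_le_of_hom {α β : Type} {A : SimpleGraph α} {B : SimpleGraph β} (f : A →g B)
    (hf : Function.Injective f) : B.egirth ≤ A.egirth := by
  conv_rhs => rw [SimpleGraph.egirth]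
  refine le_iInf fun a => le_iInf fun w => le_iInf fun hw => ?_
  calc B.egirth ≤ ((w.map f).length : ℕ∞) := egirth_le_len B _ (hw.map hf)
    _ = (w.length : ℕ∞) := by simp

lemma egirth_iso {α β : Type} {A : SimpleGraph α} {B : SimpleGraph β} (f : A ≃g B) :
    B.egirth = A.egirth :=
  le_antisymm (egirth_le_of_hom f.toHom f.toEquiv.injective)
    (egirth_le_of_hom f.symm.toHom f.symm.toEquiv.injective)

/-- Walks in `HG` avoiding the hubs descend to walks in `G` within a single copy. -/
lemma descend {c d : (Fin k × Wt u v) ⊕ Fin 2} (s : (HG G u v k).Walk c d) :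
    (∀ z ∈ s.support, ∃ p, z = Sum.inl p) →
    ∀ (i : Fin k) (x : Wt u v), c = Sum.inl (i, x) →
      ∃ (y : Wt u v) (t : G.Walk (x : V) (y : V)),
        d = Sum.inl (i, y) ∧ t.length = s.length ∧
        s.support = t.support.map (Jf u v k i) ∧
        s.edges = t.edges.map (Sym2.map (Jf u v k i)) := by
  induction s with
  | nil =>
    rintro _ i x rfl
    exact ⟨x, .nil, rfl, rfl, by simp [Jf_wt], by simp⟩
  | @cons c c' d h s' ih =>
    rintro hs i x rfl
    obtain ⟨⟨j, w⟩, rfl⟩ := hs c' (by simp)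
    rw [HG_adj_inl_inl] at h
    obtain ⟨hij, hadj⟩ := h
    dsimp only at hij
    subst hij
    obtain ⟨y, t, rfl, hlen, hsupp, hedges⟩ :=
      ih (fun z hz => hs z (by simp [hz])) i w rfl
    refine ⟨y, .cons hadj t, rfl, by simp [hlen], ?_, ?_⟩
    · simp [hsupp, Jf_wt]
    · simp [hedges, Jf_wt, Sym2.map_pair_eq]

lemma nbr_ne (huv : u ≠ v) (hnadj : ¬ G.Adj u v) (c : Fin 2) {y : V}
    (hy : G.Adj (uvf u v c) y) : y ≠ u ∧ y ≠ v := by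
  fin_cases c <;> simp [uvf] at hy
  · exact ⟨fun h => G.irrefl (v := u) (h ▸ hy), fun h => hnadj (h ▸ hy)⟩
  · exact ⟨fun h => hnadj (h ▸ hy).symm, fun h => G.irrefl (v := v) (h ▸ hy)⟩

/-- The neighbors of hub `c` in `HG` are `k` copies of the neighbors of `uvf c` in `G`. -/
noncomputable def hubEquiv (huv : u ≠ v) (hnadj : ¬ G.Adj u v) (c : Fin 2) :
    (Fin k × (G.neighborSet (uvf u v c))) ≃ ((HG G u v k).neighborSet (.inr c)) := by
  refine Equiv.ofBijective
    (fun p => ⟨Sum.inl (p.1, ⟨p.2.1, (nbr_ne G u v huv hnadj c p.2.2).1,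
      (nbr_ne G u v huv hnadj c p.2.2).2⟩), p.2.2⟩) ⟨?_, ?_⟩
  · rintro ⟨i, y, hy⟩ ⟨j, y', hy'⟩ h
    have h := congrArg Subtype.val h
    simp only [Subtype.mk.injEq, Sum.inl.injEq, Prod.mk.injEq, Subtype.mk.injEq] at h
    exact Prod.ext h.1 (Subtype.ext h.2)
  · rintro ⟨(⟨j, w⟩ | d), hz⟩
    · exact ⟨(j, ⟨(w : V), hz⟩), rfl⟩
    · exact (hz.elim)

/-- The neighbors of a copy vertex `(i, x)` in `HG` are in bijection with neighbors of `x`. -/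
lemma Jf_mem_nbr (huv : u ≠ v) (i : Fin k) (x : Wt u v) {y : V} (hy : G.Adj (x : V) y) :
    Jf u v k i y ∈ (HG G u v k).neighborSet (Sum.inl (i, x)) := by
  by_cases hyu : y = u
  · rw [hyu, Jf_u]
    exact (show G.Adj (x : V) u from hyu ▸ hy).symm
  · by_cases hyv : y = v
    · rw [hyv, Jf_v u v k huv]
      exact (show G.Adj (x : V) v from hyv ▸ hy).symm
    · rw [Jf_w u v k i hyu hyv]
      exact ⟨rfl, hy⟩

/-- The neighbors of a copy vertex `(i, x)` in `HG` are in bijection with neighbors of `x`. -/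
noncomputable def copyEquiv (huv : u ≠ v) (hnadj : ¬ G.Adj u v) (i : Fin k) (x : Wt u v) :
    (G.neighborSet (x : V)) ≃ ((HG G u v k).neighborSet (.inl (i, x))) := by
  refine Equiv.ofBijective (fun y => ⟨Jf u v k i y.1, Jf_mem_nbr G u v k huv i x y.2⟩) ⟨?_, ?_⟩
  · intro y y' h
    exact Subtype.ext (Jf_inj u v k huv i (congrArg Subtype.val h))
  · rintro ⟨(⟨j, w⟩ | d), hz⟩
    · obtain ⟨hij, hadj⟩ := hz
      dsimp only at hij
      subst hij
      exact ⟨⟨(w : V), hadj⟩, Subtype.ext (Jf_wt u v k i w)⟩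
    · fin_cases d
      · exact ⟨⟨u, (show G.Adj u (x : V) from hz).symm⟩, Subtype.ext (Jf_u u v k i)⟩
      · exact ⟨⟨v, (show G.Adj v (x : V) from hz).symm⟩, Subtype.ext (Jf_v u v k huv i)⟩

section rot
variable {α : Type} {A : SimpleGraph α} [DecidableEq α]

lemma length_rotate' {z x : α} (C : A.Walk z z) (h : x ∈ C.support) :
    (C.rotate x h).length = C.length := by
  rw [Walk.rotate, Walk.length_append, Nat.add_comm, ← Walk.length_append, Walk.take_spec]

lemma mem_rotate_iff {z x w : α} (C : A.Walk z z) (h : x ∈ C.support) :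
    w ∈ (C.rotate x h).support ↔ w ∈ C.support := by
  rw [Walk.rotate, Walk.mem_support_append_iff, or_comm, ← Walk.mem_support_append_iff,
    Walk.take_spec]

end rot

/-- Every cycle in `HG` has length at least `g`. -/
lemma lower (huv : u ≠ v) (hnadj : ¬ G.Adj u v) {g : ℕ}
    (hGcyc : ∀ (a : V) (w : G.Walk a a), w.IsCycle → g ≤ w.length)
    (hd : g / 2 ≤ G.dist u v) (hgeven : Even g) (hg4 : 4 ≤ g) :
    ∀ (z) (C : (HG G u v k).Walk z z), C.IsCycle → g ≤ C.length := by
  classical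
  intro z C hC
  obtain ⟨m, hm⟩ := hgeven
  have hg2 : g / 2 = m := by omega
  rcases Classical.em ((Sum.inr (0 : Fin 2) : (Fin k × Wt u v) ⊕ Fin 2) ∈ C.support ∧
      (Sum.inr (1 : Fin 2) : (Fin k × Wt u v) ⊕ Fin 2) ∈ C.support) with hboth | hboth
  · -- both hubs on the cycle: use the distance bound
    obtain ⟨h0, h1⟩ := hboth
    have h1' : (Sum.inr (1 : Fin 2) : (Fin k × Wt u v) ⊕ Fin 2) ∈ (C.rotate _ h0).support :=
      (mem_rotate_iff C h0).2 h1
    set C' := C.rotate _ h0 with hC'def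
    have hlenC' : C'.length = C.length := length_rotate' C h0
    have hsplit := C'.take_spec h1'
    have hlen2 : (C'.takeUntil _ h1').length + (C'.dropUntil _ h1').length = C.length := by
      rw [← hlenC', ← Walk.length_append, hsplit]
    have d1 : g / 2 ≤ (C'.takeUntil _ h1').length := by
      have h := SimpleGraph.dist_le ((C'.takeUntil _ h1').map (Fh G u v k))
      simp only [Walk.length_map, Fh_inr] at h
      have e0 : uvf u v 0 = u := rfl
      have e1 : uvf u v 1 = v := rfl
      exact le_trans hd (le_trans h (Walk.length_map ..).le)
    have d2 : g / 2 ≤ (C'.dropUntil _ h1').length := by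
      have h := SimpleGraph.dist_le ((C'.dropUntil _ h1').map (Fh G u v k))
      simp only [Walk.length_map, Fh_inr] at h
      have e0 : uvf u v 0 = u := rfl
      have e1 : uvf u v 1 = v := rfl
      exact le_trans hd (le_trans SimpleGraph.dist_comm.le (le_trans h (Walk.length_map ..).le))
    omega
  · -- at most one hub on the cycle
    have hmiss : ∃ c : Fin 2, (Sum.inr c : (Fin k × Wt u v) ⊕ Fin 2) ∉ C.support := by
      by_contra hcon
      push_neg at hcon
      exact hboth ⟨hcon 0, hcon 1⟩
    obtain ⟨cm, hcm⟩ := hmiss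
    rcases Classical.em (∃ c : Fin 2, (Sum.inr c : (Fin k × Wt u v) ⊕ Fin 2) ∈ C.support)
      with hch | hch
    · -- exactly one hub `ch`
      obtain ⟨ch, hchmem⟩ := hch
      have hothermiss : ∀ d : Fin 2, d ≠ ch →
          (Sum.inr d : (Fin k × Wt u v) ⊕ Fin 2) ∉ C.support := by
        intro d hd
        have hne : ch ≠ cm := fun h => hcm (h ▸ hchmem)
        have hfact : ∀ a b c : Fin 2, a ≠ b → b ≠ c → a = c := by decide
        exact (hfact d ch cm hd hne) ▸ hcm
      obtain ⟨C', hlenC', hCyc', hmem'⟩ :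
          ∃ C' : (HG G u v k).Walk (Sum.inr ch) (Sum.inr ch),
            C'.length = C.length ∧ C'.IsCycle ∧ ∀ w, w ∈ C'.support ↔ w ∈ C.support :=
        ⟨C.rotate _ hchmem, length_rotate' C hchmem, hC.rotate hchmem,
          fun w => mem_rotate_iff C hchmem⟩
      cases C' with
      | nil => exact absurd rfl hCyc'.ne_nil
      | cons hadj q =>
        rename_i z₁
        rcases z₁ with (⟨i, x⟩ | d)
        swap
        · exact absurd hadj (HG_adj_inr_inr G u v k)
        have hadjx : G.Adj (uvf u v ch) (x : V) := hadj
        have hqnodup : q.support.Nodup := by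
          have := hCyc'.2
          rwa [Walk.support_cons, List.tail_cons] at this
        -- peel the last edge of q
        cases hqr : q.reverse with
        | cons hadj2 s =>
          rename_i y₁
          rcases y₁ with (⟨j, y⟩ | d)
          swap
          · exact absurd hadj2 (HG_adj_inr_inr G u v k)
          have hadjy : G.Adj (uvf u v ch) (y : V) := hadj2
          have hqsupp : q.support = s.support.reverse ++ [Sum.inr ch] := by
            rw [← List.reverse_reverse q.support, ← Walk.support_reverse, hqr,
              Walk.support_cons, List.reverse_cons]
          have hsnodup : s.support.Nodup ∧
              (Sum.inr ch : (Fin k × Wt u v) ⊕ Fin 2) ∉ s.support := by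
            have h' := hqsupp ▸ hqnodup
            rw [List.nodup_append] at h'
            exact ⟨List.nodup_reverse.1 h'.1,
              fun h => h'.2.2 _ (List.mem_reverse.2 h) _ (List.mem_singleton_self _) rfl⟩
          have hssub : ∀ w, w ∈ s.support → w ∈ C.support := by
            intro w hw
            have : w ∈ q.support := by
              rw [hqsupp]; exact List.mem_append_left _ (List.mem_reverse.2 hw)
            exact (hmem' w).1 (by rw [Walk.support_cons]; exact List.mem_cons_of_mem _ this)
          have hs : ∀ z' ∈ s.support, ∃ p, z' = Sum.inl p := by
            rintro (p | d) hz'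
            · exact ⟨p, rfl⟩
            · by_cases hdch : d = ch
              · exact absurd (hdch ▸ hz') hsnodup.2
              · exact absurd (hssub _ hz') (hothermiss d hdch)
          obtain ⟨y', t, hends, hlent, hsupp, hedges⟩ := descend G u v k s hs j y rfl
          rw [Sum.inl.injEq, Prod.mk.injEq] at hends
          obtain ⟨hji, hyx⟩ := hends
          subst hji
          subst hyx
          -- now t : G.Walk (y : V) (x : V)
          have htnodup : t.support.Nodup := List.Nodup.of_map _ (hsupp ▸ hsnodup.1)
          have humem : u ∉ t.support := by
            intro hu
            obtain ⟨p, hp⟩ := hs _ (by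
              rw [hsupp]
              exact (Jf_u u v k i) ▸ List.mem_map_of_mem (f := Jf u v k i) hu)
            cases hp
          have hvmem : v ∉ t.support := by
            intro hv
            obtain ⟨p, hp⟩ := hs _ (by
              rw [hsupp]
              exact (Jf_v u v k huv i) ▸ List.mem_map_of_mem (f := Jf u v k i) hv)
            cases hp
          have hqlen : q.length = s.length + 1 := by
            rw [← Walk.length_reverse q, hqr, Walk.length_cons, Nat.add_comm]
          have hClen : C.length = s.length + 2 := by
            rw [← hlenC', Walk.length_cons, hqlen]
          have h3 := hCyc'.three_le_length
          by_cases hxy : (x : V) = (y : V)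
          · -- degenerate: contradicts cycle length ≥ 3
            have hyx' : y = x := Subtype.ext hxy.symm
            subst hyx'
            have : t.length = 0 := by
              have hpath : t.IsPath := (Walk.isPath_def t).2 htnodup
              rw [Walk.isPath_iff_eq_nil] at hpath
              rw [hpath]; rfl
            rw [Walk.length_cons, hqlen] at h3
            omega
          · -- build a genuine cycle in `G` through `uvf ch`
            set uc := uvf u v ch with huc
            have hucuv : uc = u ∨ uc = v := by
              fin_cases ch <;> simp [huc, uvf]
            have hucnt : uc ∉ t.support := by
              rcases hucuv with h | h <;> rw [h] <;> assumption
            have hxne : (x : V) ≠ uc := by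
              rcases hucuv with h | h
              · rw [h]; exact x.2.1
              · rw [h]; exact x.2.2
            let tt : G.Walk (x : V) uc := (t.reverse).concat hadjy.symm
            have htt : tt.IsPath := by
              rw [Walk.isPath_def]
              have : tt.support = t.reverse.support ++ [uc] := by
                rw [Walk.support_concat]
              rw [this, List.nodup_append]
              refine ⟨by rw [Walk.support_reverse]; exact List.nodup_reverse.2 htnodup, List.nodup_singleton _, ?_⟩
              intro a ha b hb hb'
              rw [List.mem_singleton, ← hb'] at hb
              subst hb
              rw [Walk.support_reverse, List.mem_reverse] at ha
              exact hucnt ha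
            have hedge : s(uc, (x : V)) ∉ tt.edges := by
              intro hmem
              have : tt.edges = t.reverse.edges ++ [s((y : V), uc)] := by
                rw [Walk.edges_concat, List.concat_eq_append]
              rw [this, List.mem_append, List.mem_singleton] at hmem
              rcases hmem with hmem | hmem
              · rw [Walk.edges_reverse, List.mem_reverse] at hmem
                exact hucnt (Walk.fst_mem_support_of_mem_edges t hmem)
              · rw [Sym2.eq_iff] at hmem
                rcases hmem with ⟨h1, h2⟩ | ⟨h1, h2⟩
                · exact hxne h2
                · exact hxy h2
            have hcyc : (Walk.cons hadjx tt).IsCycle := by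
              rw [Walk.cons_isCycle_iff]
              exact ⟨htt, hedge⟩
            have := hGcyc uc _ hcyc
            rw [Walk.length_cons, Walk.length_concat, Walk.length_reverse] at this
            omega
    · -- no hub at all: the cycle lives in one copy of `G - {u,v}`
      push_neg at hch
      have hs : ∀ z' ∈ C.support, ∃ p, z' = Sum.inl p := by
        rintro (p | d) hz'
        · exact ⟨p, rfl⟩
        · exact absurd hz' (hch d)
      obtain ⟨⟨i₀, x₀⟩ | d, rfl⟩ : ∃ w, w = z := ⟨z, rfl⟩
      swap
      · exact absurd (C.start_mem_support) (hch d)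
      obtain ⟨y', t, hends, hlent, hsupp, hedges⟩ := descend G u v k C hs i₀ x₀ rfl
      rw [Sum.inl.injEq, Prod.mk.injEq] at hends
      obtain ⟨-, hyx⟩ := hends
      subst hyx
      have htcyc : t.IsCycle := by
        refine ⟨⟨⟨List.Nodup.of_map _ (hedges ▸ hC.edges_nodup)⟩, ?_⟩, ?_⟩
        · intro hnil
          have h3 := hC.three_le_length
          rw [← hlent, hnil] at h3
          simp at h3
        · have h := hC.2
          rw [hsupp, ← List.map_tail] at h
          exact List.Nodup.of_map _ h
      have := hGcyc _ t htcyc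
      omega

end Statement0Aux

open Statement0Aux in
/-- Let `g ≥ 4` be an even integer and let `G` be a finite 3-regular simple
graph of girth `g` on `n` vertices that contains two vertices at distance at least `g/2`.
Then for every integer `k ≥ 1`, setting `m = 3k`, there exists a finite simple graph `H`
of girth exactly `g` and order `k(n−2)+2` which has two vertices of degree `m` while each
of its remaining `k(n−2)` vertices has degree `3`. -/
theorem statement0 (g : ℕ) (hg4 : 4 ≤ g) (hgeven : Even g)
    (V : Type) [Fintype V] (G : SimpleGraph V)
    (hreg : ∀ v : V, (G.neighborSet v).ncard = 3)
    (hgirth : G.egirth = (g : ℕ∞))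
    (hdist : ∃ u v : V, g / 2 ≤ G.dist u v)
    (k : ℕ) (hk : 1 ≤ k) :
    ∃ H : SimpleGraph (Fin (k * (Fintype.card V - 2) + 2)),
      H.egirth = (g : ℕ∞) ∧
      ∃ a b : Fin (k * (Fintype.card V - 2) + 2), a ≠ b ∧
        (H.neighborSet a).ncard = 3 * k ∧ (H.neighborSet b).ncard = 3 * k ∧
        ∀ w, w ≠ a → w ≠ b → (H.neighborSet w).ncard = 3 := by
  classical
  obtain ⟨u, v, hdist⟩ := hdist
  have hg2 : 2 ≤ g / 2 := by omega
  have huv : u ≠ v := by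
    intro h
    rw [h, SimpleGraph.dist_self] at hdist
    omega
  have hnadj : ¬ G.Adj u v := by
    intro h
    have h1 := SimpleGraph.dist_le h.toWalk
    simp [SimpleGraph.Adj.toWalk] at h1
    omega
  have hGcyc : ∀ (a : V) (w : G.Walk a a), w.IsCycle → g ≤ w.length := by
    intro a w hw
    have h1 := egirth_le_len G w hw
    rw [hgirth] at h1
    exact_mod_cast h1
  have hnotacyc : ¬ G.IsAcyclic := by
    intro h
    rw [← SimpleGraph.egirth_eq_top, hgirth] at h
    simp at h
  obtain ⟨a₀, w₀, hw₀, hlw₀⟩ := SimpleGraph.exists_egirth_eq_length.2 hnotacyc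
  have hlen₀ : w₀.length = g := by
    rw [hgirth] at hlw₀
    exact_mod_cast hlw₀.symm
  set i₀ : Fin k := ⟨0, hk⟩ with hi₀
  set HGg := HG G u v k with hHGg
  -- girth of HGg
  have hup : HGg.egirth ≤ (g : ℕ∞) := by
    have h1 := egirth_le_len HGg (w₀.map (Jh G u v k huv hnadj i₀))
      ((Walk.map_isCycle_iff_of_injective (Jf_inj u v k huv i₀)).2 hw₀)
    rwa [Walk.length_map, hlen₀] at h1
  have hlo : (g : ℕ∞) ≤ HGg.egirth :=
    SimpleGraph.le_egirth.2 fun z C hC =>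
      Nat.cast_le.2 (lower G u v k huv hnadj hGcyc hdist hgeven hg4 z C hC)
  have hHGirth : HGg.egirth = (g : ℕ∞) := le_antisymm hup hlo
  -- cardinality
  have hc2 : Fintype.card ↥({u, v} : Set V) = 2 := by
    rw [← Nat.card_eq_fintype_card, Nat.card_coe_set_eq, Set.ncard_pair huv]
  have hcW : Fintype.card (Wt u v) = Fintype.card V - 2 := by
    have e : Wt u v ≃ ↥(({u, v} : Set V)ᶜ) :=
      Equiv.subtypeEquivRight (fun x => by simp [not_or])
    rw [Fintype.card_congr e, Fintype.card_compl_set, hc2]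
  have hcard : Fintype.card ((Fin k × Wt u v) ⊕ Fin 2) =
      k * (Fintype.card V - 2) + 2 := by
    rw [Fintype.card_sum, Fintype.card_prod, Fintype.card_fin, Fintype.card_fin, hcW]
  have iso := SimpleGraph.overFinIso (G := HGg) hcard
  refine ⟨HGg.overFin hcard, ?_, iso (Sum.inr 0), iso (Sum.inr 1), ?_, ?_, ?_, ?_⟩
  · rw [egirth_iso iso]
    exact hHGirth
  · intro h
    have := iso.toEquiv.injective h
    simp at this
  · rw [← Nat.card_coe_set_eq, Nat.card_congr (iso.mapNeighborSet (Sum.inr 0)).symm,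
      Nat.card_congr (hubEquiv G u v k huv hnadj 0).symm, Nat.card_prod,
      Nat.card_eq_fintype_card, Fintype.card_fin, Nat.card_coe_set_eq]
    have : uvf u v 0 = u := rfl
    rw [this, hreg u, Nat.mul_comm]
  · rw [← Nat.card_coe_set_eq, Nat.card_congr (iso.mapNeighborSet (Sum.inr 1)).symm,
      Nat.card_congr (hubEquiv G u v k huv hnadj 1).symm, Nat.card_prod,
      Nat.card_eq_fintype_card, Fintype.card_fin, Nat.card_coe_set_eq]
    have : uvf u v 1 = v := rfl
    rw [this, hreg v, Nat.mul_comm]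
  · intro w hwa hwb
    have hw : w = iso (iso.symm w) := (iso.apply_symm_apply w).symm
    rcases hz : iso.symm w with (⟨i, x⟩ | c)
    · rw [hz] at hw
      rw [hw, ← Nat.card_coe_set_eq,
        Nat.card_congr (iso.mapNeighborSet (Sum.inl (i, x))).symm,
        Nat.card_congr (copyEquiv G u v k huv hnadj i x).symm, Nat.card_coe_set_eq,
        hreg]
    · rw [hz] at hw
      exfalso
      fin_cases c
      · exact hwa hw
      · exact hwb hw
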